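/- Let f : ℝⁿ × ℝᵐ → ℝⁿ and φ : ℝⁿ × ℝᵐ → ℝᵏ be continuously differentiable. Suppose q₀, q₁, p₀, p₁ ∈ ℝⁿ and internal stages Qⁱ, Pⁱ ∈ ℝⁿ, Uⁱ ∈ ℝᵐ, Λⁱ ∈ ℝᵏ (i = 1,…,s) satisfy the presymplectic partitioned Runge–Kutta equations: q₁ = q₀ + Δt·Σᵢ bᵢ f(Qⁱ,Uⁱ); Qⁱ = q₀ + Δt·Σⱼ aᵢⱼ f(Qʲ,Uʲ); p₁ = p₀ − Δt·Σᵢ bᵢ ( D_qf(Qⁱ,Uⁱ)ᵀ Pⁱ + D_qφ(Qⁱ,Uⁱ)ᵀ Λⁱ ); Pⁱ = p₀ − Δt·Σⱼ ãᵢⱼ ( D_qf(Qʲ,Uʲ)ᵀ Pʲ + D_qφ(Qʲ,Uʲ)ᵀ Λʲ ); 0 = φ(Qⁱ,Uⁱ); 0 = D_uf(Qⁱ,Uⁱ)ᵀ Pⁱ + D_uφ(Qⁱ,Uⁱ)ᵀ Λⁱ. Suppose further that δq₀, δq₁, δQⁱ ∈ ℝⁿ and δUⁱ ∈ ℝᵐ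 satisfy the discrete variational equations: δq₁ = δq₀ + Δt·Σᵢ bᵢ ( D_qf(Qⁱ,Uⁱ) δQⁱ + D_uf(Qⁱ,Uⁱ) δUⁱ ); δQⁱ = δq₀ + Δt·Σⱼ aᵢⱼ ( D_qf(Qʲ,Uʲ) δQʲ + D_uf(Qʲ,Uʲ) δUʲ ); 0 = D_qφ(Qⁱ,Uⁱ) δQⁱ + D_uφ(Qⁱ,Uⁱ) δUⁱ. Then ⟨p₁, δq₁⟩ = ⟨p₀, δq₀⟩. -/

import Mathlib

open scoped RealInnerProductSpace

noncomputable section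

abbrev Euc (n : ℕ) : Type := EuclideanSpace ℝ (Fin n)

/-- Partial Jacobian `D_qF(q,u)` with respect to the first argument. -/
noncomputable def Dq {n m k : ℕ} (F : Euc n × Euc m → Euc k) (q : Euc n) (u : Euc m) :
    Euc n →L[ℝ] Euc k :=
  fderiv ℝ (fun q' => F (q', u)) q

/-- Partial Jacobian `D_uF(q,u)` with respect to the second argument. -/
noncomputable def Du {n m k : ℕ} (F : Euc n × Euc m → Euc k) (q : Euc n) (u : Euc m) :
    Euc m →L[ℝ] Euc k :=
  fderiv ℝ (fun u' => F (q, u')) u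

/-- `D_qF(q,u)ᵀ`, the transpose (adjoint) of the partial Jacobian in `q`. -/
noncomputable def DqT {n m k : ℕ} (F : Euc n × Euc m → Euc k) (q : Euc n) (u : Euc m) :
    Euc k →L[ℝ] Euc n :=
  ContinuousLinearMap.adjoint (Dq F q u)

/-- `D_uF(q,u)ᵀ`, the transpose (adjoint) of the partial Jacobian in `u`. -/
noncomputable def DuT {n m k : ℕ} (F : Euc n × Euc m → Euc k) (q : Euc n) (u : Euc m) :
    Euc k →L[ℝ] Euc m :=
  ContinuousLinearMap.adjoint (Du F q u)

/-- Partial gradient `∇_qL(q,u)`. -/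
noncomputable def gradQ {n m : ℕ} (L : Euc n × Euc m → ℝ) (q : Euc n) (u : Euc m) : Euc n :=
  gradient (fun q' => L (q', u)) q

/-- Partial gradient `∇_uL(q,u)`. -/
noncomputable def gradU {n m : ℕ} (L : Euc n × Euc m → ℝ) (q : Euc n) (u : Euc m) : Euc m :=
  gradient (fun u' => L (q, u')) u

/-- the presymplectic partitioned Runge–Kutta discretization of the adjoint
DAE system preserves the discrete quadratic invariant: `⟨p₁, δq₁⟩ = ⟨p₀, δq₀⟩`. -/
theorem discrete_adjoint_DAE_quadratic_invariant {n m k s : ℕ} (hs : 1 ≤ s)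
    (f : Euc n × Euc m → Euc n) (φ : Euc n × Euc m → Euc k)
    (hf : ContDiff ℝ 1 f) (hφ : ContDiff ℝ 1 φ)
    (Δt : ℝ) (hΔt : 0 < Δt)
    (a a' : Fin s → Fin s → ℝ) (b : Fin s → ℝ)
    (hsym : ∀ i j, b i * a' i j + b j * a j i = b i * b j)
    (q₀ q₁ p₀ p₁ : Euc n) (Q P : Fin s → Euc n) (U : Fin s → Euc m) (Λ : Fin s → Euc k)
    (hq1 : q₁ = q₀ + Δt • ∑ i, b i • f (Q i, U i))
    (hQ : ∀ i, Q i = q₀ + Δt • ∑ j, a i j • f (Q j, U j))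
    (hp1 : p₁ = p₀ - Δt • ∑ i, b i •
      (DqT f (Q i) (U i) (P i) + DqT φ (Q i) (U i) (Λ i)))
    (hP : ∀ i, P i = p₀ - Δt • ∑ j, a' i j •
      (DqT f (Q j) (U j) (P j) + DqT φ (Q j) (U j) (Λ j)))
    (hconstr : ∀ i, φ (Q i, U i) = 0)
    (hadj : ∀ i, DuT f (Q i) (U i) (P i) + DuT φ (Q i) (U i) (Λ i) = 0)
    (δq₀ δq₁ : Euc n) (δQ : Fin s → Euc n) (δU : Fin s → Euc m)
    (hδq1 : δq₁ = δq₀ + Δt • ∑ i, b i •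
      (Dq f (Q i) (U i) (δQ i) + Du f (Q i) (U i) (δU i)))
    (hδQ : ∀ i, δQ i = δq₀ + Δt • ∑ j, a i j •
      (Dq f (Q j) (U j) (δQ j) + Du f (Q j) (U j) (δU j)))
    (hδconstr : ∀ i, Dq φ (Q i) (U i) (δQ i) + Du φ (Q i) (U i) (δU i) = 0) :
    ⟪p₁, δq₁⟫ = ⟪p₀, δq₀⟫ := by
  classical
  set G : Fin s → Euc n := fun i => DqT f (Q i) (U i) (P i) + DqT φ (Q i) (U i) (Λ i)
    with hGdef
  set F : Fin s → Euc n := fun i => Dq f (Q i) (U i) (δQ i) + Du f (Q i) (U i) (δU i)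
    with hFdef
  set x : Fin s → Fin s → ℝ := fun i j => ⟪G i, F j⟫ with hxdef
  have hP' : ∀ i, P i = p₀ - Δt • ∑ j, a' i j • G j := hP
  have hδQ' : ∀ i, δQ i = δq₀ + Δt • ∑ j, a i j • F j := hδQ
  have hp1' : p₁ = p₀ - Δt • ∑ i, b i • G i := hp1
  have hδq1' : δq₁ = δq₀ + Δt • ∑ i, b i • F i := hδq1
  -- per-stage cancellation from the constraint and adjoint equations
  have hstage : ∀ i, ⟪P i, F i⟫ = ⟪G i, δQ i⟫ := by
    intro i
    have h1 : Du φ (Q i) (U i) (δU i) = - Dq φ (Q i) (U i) (δQ i) := by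
      have h := hδconstr i
      rw [eq_neg_iff_add_eq_zero, add_comm]; exact h
    have h2 : DuT f (Q i) (U i) (P i) = - DuT φ (Q i) (U i) (Λ i) :=
      eq_neg_of_add_eq_zero_left (hadj i)
    have e1 : ⟪P i, Du f (Q i) (U i) (δU i)⟫ = ⟪Λ i, Dq φ (Q i) (U i) (δQ i)⟫ := by
      calc ⟪P i, Du f (Q i) (U i) (δU i)⟫
          = ⟪DuT f (Q i) (U i) (P i), δU i⟫ := by
            rw [DuT, ContinuousLinearMap.adjoint_inner_left]
        _ = - ⟪DuT φ (Q i) (U i) (Λ i), δU i⟫ := by rw [h2, inner_neg_left]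
        _ = - ⟪Λ i, Du φ (Q i) (U i) (δU i)⟫ := by
            rw [DuT, ContinuousLinearMap.adjoint_inner_left]
        _ = ⟪Λ i, Dq φ (Q i) (U i) (δQ i)⟫ := by rw [h1, inner_neg_right, neg_neg]
    have e2 : ⟪P i, Dq f (Q i) (U i) (δQ i)⟫ = ⟪DqT f (Q i) (U i) (P i), δQ i⟫ := by
      rw [DqT, ContinuousLinearMap.adjoint_inner_left]
    have e3 : ⟪Λ i, Dq φ (Q i) (U i) (δQ i)⟫ = ⟪DqT φ (Q i) (U i) (Λ i), δQ i⟫ := by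
      rw [DqT, ContinuousLinearMap.adjoint_inner_left]
    show ⟪P i, F i⟫ = ⟪G i, δQ i⟫
    rw [hFdef, hGdef]
    simp only [inner_add_right, inner_add_left]
    rw [e1, e2, e3]
  have key1 : ∀ i, ⟪p₀, F i⟫ = ⟪G i, δQ i⟫ + Δt * ∑ j, a' i j * x j i := by
    intro i
    have h : ⟪P i, F i⟫ = ⟪p₀, F i⟫ - Δt * ∑ j, a' i j * x j i := by
      rw [hP' i]
      simp only [inner_sub_left, sum_inner, real_inner_smul_left, hxdef]
    have h2 := hstage i
    linarith [h, h2]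
  have key2 : ∀ i, ⟪G i, δq₀⟫ = ⟪G i, δQ i⟫ - Δt * ∑ j, a i j * x i j := by
    intro i
    have h : ⟪G i, δQ i⟫ = ⟪G i, δq₀⟫ + Δt * ∑ j, a i j * x i j := by
      rw [hδQ' i]
      simp only [inner_add_right, inner_sum, real_inner_smul_right, hxdef]
    linarith [h]
  have expand : ⟪p₁, δq₁⟫ = ⟪p₀, δq₀⟫ + Δt * ∑ i, b i * ⟪p₀, F i⟫
      - Δt * ∑ i, b i * ⟪G i, δq₀⟫ - Δt^2 * ∑ i, ∑ j, b i * (b j * x i j) := by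
    rw [hp1', hδq1']
    simp only [inner_sub_left, inner_add_right, real_inner_smul_left, real_inner_smul_right,
      sum_inner, inner_sum, hxdef, Finset.mul_sum, mul_add, Finset.sum_add_distrib]
    ring_nf
    rw [show (∑ i, ∑ j, Δt ^ 2 * b i * b j * ⟪G j, F i⟫)
        = ∑ i, ∑ j, Δt ^ 2 * b i * b j * ⟪G i, F j⟫ from by
      rw [Finset.sum_comm]
      exact Finset.sum_congr rfl fun i _ => Finset.sum_congr rfl fun j _ => by ring]
  have e1 : ∑ i, b i * ⟪p₀, F i⟫ - ∑ i, b i * ⟪G i, δq₀⟫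
      = Δt * ∑ i, ∑ j, (b i * (a' i j * x j i) + b i * (a i j * x i j)) := by
    rw [← Finset.sum_sub_distrib, Finset.mul_sum]
    refine Finset.sum_congr rfl fun i _ => ?_
    rw [key1 i, key2 i]
    rw [show ∀ (A S1 S2 : ℝ), b i * (A + Δt * S1) - b i * (A - Δt * S2)
        = Δt * (b i * S1 + b i * S2) from fun A S1 S2 => by ring]
    rw [Finset.mul_sum, Finset.mul_sum, ← Finset.sum_add_distrib, Finset.mul_sum]
  have e2 : ∑ i, ∑ j, (b i * (a' i j * x j i) + b i * (a i j * x i j))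
      = ∑ i, ∑ j, b i * (b j * x i j) := by
    have hc : ∑ i, ∑ j, b i * (a' i j * x j i) = ∑ i, ∑ j, b j * (a' j i * x i j) :=
      Finset.sum_comm
    calc ∑ i, ∑ j, (b i * (a' i j * x j i) + b i * (a i j * x i j))
        = ∑ i, ∑ j, b i * (a' i j * x j i) + ∑ i, ∑ j, b i * (a i j * x i j) := by
          rw [← Finset.sum_add_distrib]
          exact Finset.sum_congr rfl fun i _ => by rw [Finset.sum_add_distrib]
      _ = ∑ i, ∑ j, b j * (a' j i * x i j) + ∑ i, ∑ j, b i * (a i j * x i j) := by rw [hc]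
      _ = ∑ i, ∑ j, (b j * (a' j i * x i j) + b i * (a i j * x i j)) := by
          rw [← Finset.sum_add_distrib]
          exact Finset.sum_congr rfl fun i _ => by rw [Finset.sum_add_distrib]
      _ = ∑ i, ∑ j, b i * (b j * x i j) := by
          refine Finset.sum_congr rfl fun i _ => Finset.sum_congr rfl fun j _ => ?_
          have h := hsym j i
          linear_combination (x i j) * h
  rw [expand]
  have hfin : Δt * ∑ i, b i * ⟪p₀, F i⟫ - Δt * ∑ i, b i * ⟪G i, δq₀⟫
      = Δt^2 * ∑ i, ∑ j, b i * (b j * x i j) := by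
    rw [← mul_sub, e1, e2]; ring
  linarith [hfin]

end
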